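/- Let g : (0,∞) → [0,∞) be a non-increasing, right-continuous function, and let C > 0, α > 0 and λ ∈ (0,1] be constants such that t·g(t+s) ≤ C·g(s)^{1+α} for every s > 0 and every t with 0 ≤ t ≤ λ. Assume that there exist S₀ > 0 and t₀ with 0 ≤ t₀ ≤ λ satisfying g(S₀)^α < t₀/(2C). Then g(S) = 0 for all S ≥ S₀ + t₀/(1 − 2^{−α}). -/
import Mathlib


/-- De Giorgi iteration lemma (Lemma 3.2): if `g` is non-increasing, nonnegative and
right-continuous on `(0,∞)`, satisfies `t * g (t + s) ≤ C * g s ^ (1 + α)` for all `s > 0`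
and `0 ≤ t ≤ λ`, and `g S₀ ^ α < t₀ / (2C)` for some `S₀ > 0` and `0 ≤ t₀ ≤ λ`,
then `g S = 0` for all `S ≥ S₀ + t₀ / (1 - 2 ^ (-α))`. -/
theorem de_giorgi_iteration
    (g : ℝ → ℝ)
    (hmono : ∀ s t : ℝ, 0 < s → s ≤ t → g t ≤ g s)
    (hnonneg : ∀ s : ℝ, 0 < s → 0 ≤ g s)
    (hrc : ∀ s : ℝ, 0 < s → ContinuousWithinAt g (Set.Ioi s) s)
    (C α lam : ℝ) (hC : 0 < C) (hα : 0 < α) (hlam0 : 0 < lam) (hlam1 : lam ≤ 1)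
    (hiter : ∀ s t : ℝ, 0 < s → 0 ≤ t → t ≤ lam → t * g (t + s) ≤ C * g s ^ (1 + α))
    (S₀ t₀ : ℝ) (hS₀ : 0 < S₀) (ht₀0 : 0 ≤ t₀) (ht₀lam : t₀ ≤ lam)
    (hsmall : g S₀ ^ α < t₀ / (2 * C)) :
    ∀ S : ℝ, S₀ + t₀ / (1 - (2 : ℝ) ^ (-α)) ≤ S → g S = 0 := by
  set r : ℝ := (2 : ℝ) ^ (-α) with hr
  have h2C : (0:ℝ) < 2 * C := by linarith
  have hr0 : 0 < r := Real.rpow_pos_of_pos two_pos _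
  have hr1 : r < 1 := Real.rpow_lt_one_of_one_lt_of_neg one_lt_two (by linarith)
  have h1r : 0 < 1 - r := by linarith
  have hgS₀0 : 0 ≤ g S₀ := hnonneg S₀ hS₀
  have hgS₀α : 0 ≤ g S₀ ^ α := Real.rpow_nonneg hgS₀0 α
  have ht₀key : 2 * C * g S₀ ^ α ≤ t₀ := by
    have := (lt_div_iff₀ h2C).mp hsmall
    nlinarith
  -- the iteration sequence
  obtain ⟨s, hs0, hsS⟩ : ∃ s : ℕ → ℝ, s 0 = S₀ ∧
      ∀ j, s (j+1) = s j + 2 * C * (g (s j)) ^ α :=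
    ⟨fun j => Nat.rec S₀ (fun _ x => x + 2 * C * (g x) ^ α) j, rfl, fun _ => rfl⟩
  have hhalf : ∀ j : ℕ, ((1/2 : ℝ) ^ j) ^ α = r ^ j := by
    intro j
    have h12 : ((1/2 : ℝ) ^ j) = (2:ℝ) ^ (-(j:ℝ)) := by
      rw [Real.rpow_neg (by norm_num), Real.rpow_natCast]
      simp [one_div, inv_pow]
    rw [h12, ← Real.rpow_natCast r j, hr, ← Real.rpow_mul (by norm_num : (0:ℝ) ≤ 2),
      ← Real.rpow_mul (by norm_num : (0:ℝ) ≤ 2)]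
    ring_nf
  have key : ∀ j : ℕ, 0 < s j ∧ g (s j) ≤ (1/2 : ℝ) ^ j * g S₀ ∧
      s j ≤ S₀ + t₀ * (1 - r ^ j) / (1 - r) := by
    intro j
    induction j with
    | zero => refine ⟨hs0 ▸ hS₀, by simp [hs0], by simp [hs0]⟩
    | succ j ih =>
      obtain ⟨hpos, hg, hsb⟩ := ih
      have hgj0 : 0 ≤ g (s j) := hnonneg _ hpos
      have hrj0 : (0:ℝ) ≤ r ^ j := (pow_pos hr0 j).le
      have hrj1 : r ^ j ≤ 1 := pow_le_one₀ hr0.le hr1.le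
      have hgα : g (s j) ^ α ≤ g S₀ ^ α * r ^ j := by
        have h1 : g (s j) ^ α ≤ ((1/2 : ℝ) ^ j * g S₀) ^ α :=
          Real.rpow_le_rpow hgj0 hg hα.le
        have h2 : ((1/2 : ℝ) ^ j * g S₀) ^ α = r ^ j * g S₀ ^ α := by
          rw [Real.mul_rpow (by positivity) hgS₀0, hhalf]
        rw [h2] at h1; linarith [h1]
      have htnn : 0 ≤ 2 * C * g (s j) ^ α := by positivity
      have htle : 2 * C * g (s j) ^ α ≤ t₀ * r ^ j := by nlinarith
      have htlam : 2 * C * g (s j) ^ α ≤ lam := by nlinarith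
      have hpos' : 0 < s (j+1) := by rw [hsS]; linarith
      refine ⟨hpos', ?_, ?_⟩
      · -- the halving step
        rcases eq_or_lt_of_le hgj0 with h0 | h0
        · have hzero : g (s j) ^ α = 0 := by
            rw [← h0, Real.zero_rpow hα.ne']
          have : s (j+1) = s j := by rw [hsS, hzero]; ring
          rw [this, ← h0]
          positivity
        · have htpos : 0 < 2 * C * g (s j) ^ α := by positivity
          have hit := hiter (s j) (2 * C * g (s j) ^ α) hpos htnn htlam
          have hexp : g (s j) ^ (1 + α) = g (s j) * g (s j) ^ α := by
            rw [Real.rpow_add h0, Real.rpow_one]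
          rw [hexp] at hit
          have heq : s (j+1) = 2 * C * g (s j) ^ α + s j := by rw [hsS]; ring
          rw [← heq] at hit
          have hhalfstep : g (s (j+1)) ≤ g (s j) / 2 := by
            have hgα0 : 0 < g (s j) ^ α := Real.rpow_pos_of_pos h0 α
            nlinarith
          calc g (s (j+1)) ≤ g (s j) / 2 := hhalfstep
            _ ≤ ((1/2:ℝ) ^ j * g S₀) / 2 := by linarith
            _ = (1/2:ℝ) ^ (j+1) * g S₀ := by ring
      · have hid : t₀ * (1 - r ^ j) / (1 - r) + t₀ * r ^ j
            = t₀ * (1 - r ^ (j+1)) / (1 - r) := by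
          field_simp
          ring
        rw [hsS]
        linarith
  intro S hS
  have ht₀div : 0 ≤ t₀ / (1 - r) := div_nonneg ht₀0 h1r.le
  have hSpos : 0 < S := by linarith
  have hgS0 : 0 ≤ g S := hnonneg S hSpos
  have hle : ∀ j : ℕ, g S ≤ (1/2 : ℝ) ^ j * g S₀ := by
    intro j
    obtain ⟨hpos, hg, hsb⟩ := key j
    have hrj0 : (0:ℝ) ≤ r ^ j := (pow_pos hr0 j).le
    have h1 : t₀ * (1 - r ^ j) / (1 - r) ≤ t₀ / (1 - r) := by
      exact (div_le_div_iff_of_pos_right h1r).mpr (by nlinarith)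
    have hsjS : s j ≤ S := by linarith
    exact le_trans (hmono (s j) S hpos hsjS) hg
  have htend : Filter.Tendsto (fun j : ℕ => (1/2 : ℝ) ^ j * g S₀)
      Filter.atTop (nhds 0) := by
    have := (tendsto_pow_atTop_nhds_zero_of_lt_one (by norm_num : (0:ℝ) ≤ 1/2)
      (by norm_num : (1/2:ℝ) < 1)).mul_const (g S₀)
    simpa using this
  have hgle : g S ≤ 0 := ge_of_tendsto' htend hle
  linarith
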